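/- Let M be a deterministic, truthful, proportional two-agent mechanism, with M(uniform, uniform) = (X_1, X_2) where |X_1| = |X_2| = 1/2. Consider the input F³ where f_1 equals 0.5 on X_1 and 1 on X_2, and f_2 equals ε on X_1 and 1 on X_2, for sufficiently small ε > 0. Then the output (A_1, A_2) = M(F³) satisfies |A_1 ∩ X_1| = |A_1 ∩ X_2| = |A_2 ∩ X_1| = |A_2 ∩ X_2| = 1/4. -/

import Mathlib

open MeasureTheory Set
open scoped Classical
open scoped ENNReal

/-- The value of set `X` under value density function `f`. -/
noncomputable def val (f : ℝ → ℝ) (X : Set ℝ) : ℝ := ∫ t in X, f t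

/-- An admissible value density function: measurable and nonnegative. -/
def Adm (f : ℝ → ℝ) : Prop := Measurable f ∧ ∀ x, 0 ≤ f x

lemma val_one (S : Set ℝ) : val (fun _ => (1:ℝ)) S = (volume S).toReal := by
  simp [val, measureReal_def]

lemma val_piece (X : Set ℝ) (hX : MeasurableSet X) (r : ℝ) (hr0 : 0 ≤ r) (hr1 : r ≤ 1)
    (S : Set ℝ) (hS : MeasurableSet S) (hfin : volume S ≠ ⊤) :
    val (fun x => if x ∈ X then r else 1) S
      = r * (volume (S ∩ X)).toReal + (volume (S \ X)).toReal := by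
  have hfm : Measurable fun x => if x ∈ X then r else 1 :=
    Measurable.ite hX measurable_const measurable_const
  have hint : IntegrableOn (fun x => if x ∈ X then r else 1) S volume := by
    apply Measure.integrableOn_of_bounded hfin hfm.aestronglyMeasurable (M := 1)
    filter_upwards with x
    by_cases h : x ∈ X
    · simp only [if_pos h, Real.norm_eq_abs, abs_of_nonneg hr0]; exact hr1
    · simp only [if_neg h, norm_one, le_refl]
  have h1 : ∫ t in S ∩ X, (if t ∈ X then r else 1) = r * (volume (S ∩ X)).toReal := by
    rw [setIntegral_congr_fun (hS.inter hX) (g := fun _ => r) (fun x hx => if_pos hx.2)]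
    rw [setIntegral_const]; rw [smul_eq_mul, mul_comm]; rfl
  have h2 : ∫ t in S \ X, (if t ∈ X then r else 1) = (volume (S \ X)).toReal := by
    rw [setIntegral_congr_fun (hS.diff hX) (g := fun _ => (1:ℝ)) (fun x hx => if_neg hx.2)]
    simp [measureReal_def]
  have h3 := integral_inter_add_diff (μ := volume)
    (f := fun x => if x ∈ X then r else 1) (s := S) hX hint
  simp only [val]
  rw [← h3, h1, h2]

theorem output_on_instance_three
    (M : (ℝ → ℝ) → (ℝ → ℝ) → Set ℝ × Set ℝ)
    (hSets : ∀ f₁ f₂, Adm f₁ → Adm f₂ →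
      MeasurableSet (M f₁ f₂).1 ∧ MeasurableSet (M f₁ f₂).2 ∧
      (M f₁ f₂).1 ⊆ Set.Icc 0 1 ∧ (M f₁ f₂).2 ⊆ Set.Icc 0 1 ∧
      Disjoint (M f₁ f₂).1 (M f₁ f₂).2)
    (hProp : ∀ f₁ f₂, Adm f₁ → Adm f₂ →
      val f₁ (M f₁ f₂).1 ≥ (1/2) * val f₁ (Set.Icc 0 1) ∧
      val f₂ (M f₁ f₂).2 ≥ (1/2) * val f₂ (Set.Icc 0 1))
    (hTruth1 : ∀ f₁ f₁' f₂, Adm f₁ → Adm f₁' → Adm f₂ →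
      val f₁ (M f₁ f₂).1 ≥ val f₁ (M f₁' f₂).1)
    (hTruth2 : ∀ f₁ f₂ f₂', Adm f₁ → Adm f₂ → Adm f₂' →
      val f₂ (M f₁ f₂).2 ≥ val f₂ (M f₁ f₂').2)
    (X₁ X₂ : Set ℝ)
    (hUnif : M (fun _ => 1) (fun _ => 1) = (X₁, X₂))
    (hX₁ : volume X₁ = 1/2) (hX₂ : volume X₂ = 1/2) :
    ∃ ε₀ > (0:ℝ), ∀ ε : ℝ, 0 < ε → ε < ε₀ →
      -- the behavior forced on the instance of Proposition 2:
      M (fun _ => 1) (fun x => if x ∈ X₁ then ε else 1) = (X₁, X₂) →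
      -- conclusion about the instance F³:
      (volume ((M (fun x => if x ∈ X₁ then 0.5 else 1) (fun x => if x ∈ X₁ then ε else 1)).1 ∩ X₁) = 1/4 ∧
       volume ((M (fun x => if x ∈ X₁ then 0.5 else 1) (fun x => if x ∈ X₁ then ε else 1)).1 ∩ X₂) = 1/4 ∧
       volume ((M (fun x => if x ∈ X₁ then 0.5 else 1) (fun x => if x ∈ X₁ then ε else 1)).2 ∩ X₁) = 1/4 ∧
       volume ((M (fun x => if x ∈ X₁ then 0.5 else 1) (fun x => if x ∈ X₁ then ε else 1)).2 ∩ X₂) = 1/4) := by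
  refine ⟨1/2, by norm_num, ?_⟩
  intro ε hε0 hεh hM2
  -- basic admissibility
  have hAu : Adm (fun _ => (1:ℝ)) := ⟨measurable_const, fun _ => by norm_num⟩
  -- properties of X₁ X₂ from uniform-uniform round
  obtain ⟨hm1, hm2, hs1, hs2, hdisj⟩ := hSets _ _ hAu hAu
  rw [hUnif] at hm1 hm2 hs1 hs2 hdisj
  have hX₁m : MeasurableSet X₁ := hm1
  have hX₂m : MeasurableSet X₂ := hm2
  -- the densities
  set f₁ : ℝ → ℝ := fun x => if x ∈ X₁ then 0.5 else 1 with hf₁def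
  set f₂ : ℝ → ℝ := fun x => if x ∈ X₁ then ε else 1 with hf₂def
  have hA1 : Adm f₁ := ⟨Measurable.ite hX₁m measurable_const measurable_const, fun x => by
    by_cases h : x ∈ X₁
    · rw [hf₁def]; simp only [if_pos h]; norm_num
    · rw [hf₁def]; simp only [if_neg h]; norm_num⟩
  have hA2 : Adm f₂ := ⟨Measurable.ite hX₁m measurable_const measurable_const, fun x => by
    by_cases h : x ∈ X₁
    · rw [hf₂def]; simp only [if_pos h]; exact le_of_lt hε0
    · rw [hf₂def]; simp only [if_neg h]; norm_num⟩
  -- the output on F³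
  obtain ⟨hAm1, hAm2, hAs1, hAs2, hAdisj⟩ := hSets _ _ hA1 hA2
  set A₁ : Set ℝ := (M f₁ f₂).1 with hA₁def
  set A₂ : Set ℝ := (M f₁ f₂).2 with hA₂def
  -- volume of Icc 0 1
  have hIcc : volume (Icc (0:ℝ) 1) = 1 := by
    rw [Real.volume_Icc]; norm_num
  have hfinIcc : ∀ S : Set ℝ, S ⊆ Icc 0 1 → volume S ≠ ⊤ := by
    intro S hS
    exact ((measure_mono hS).trans_lt (by rw [hIcc]; exact ENNReal.one_lt_top)).ne
  -- X₁ ∪ X₂ covers Icc 0 1 up to null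
  have hU : volume (X₁ ∪ X₂) = 1 := by
    rw [measure_union hdisj hX₂m, hX₁, hX₂]
    rw [ENNReal.div_add_div_same]
    norm_num
    exact ENNReal.div_self (two_ne_zero) (ENNReal.ofNat_ne_top)
  have hN : volume (Icc (0:ℝ) 1 \ (X₁ ∪ X₂)) = 0 := by
    have hsub : X₁ ∪ X₂ ⊆ Icc 0 1 := union_subset hs1 hs2
    rw [measure_diff hsub (hX₁m.union hX₂m).nullMeasurableSet (by rw [hU]; exact ENNReal.one_ne_top)]
    rw [hIcc, hU]; simp
  -- for S ⊆ Icc 0 1 : volume (S \ X₁) = volume (S ∩ X₂)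
  have hsplit : ∀ S : Set ℝ, S ⊆ Icc 0 1 → volume (S \ X₁) = volume (S ∩ X₂) := by
    intro S hS
    apply le_antisymm
    · have hsub : S \ X₁ ⊆ (S ∩ X₂) ∪ (Icc (0:ℝ) 1 \ (X₁ ∪ X₂)) := by
        intro x hx
        by_cases hx2 : x ∈ X₂
        · exact Or.inl ⟨hx.1, hx2⟩
        · exact Or.inr ⟨hS hx.1, fun h => h.elim hx.2 hx2⟩
      calc volume (S \ X₁) ≤ volume ((S ∩ X₂) ∪ (Icc (0:ℝ) 1 \ (X₁ ∪ X₂))) := measure_mono hsub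
        _ ≤ volume (S ∩ X₂) + volume (Icc (0:ℝ) 1 \ (X₁ ∪ X₂)) := measure_union_le _ _
        _ = volume (S ∩ X₂) := by rw [hN, add_zero]
    · apply measure_mono
      intro x hx
      exact ⟨hx.1, Set.disjoint_right.mp hdisj hx.2⟩
  -- abbreviations for the four real quantities
  set a : ℝ := (volume (A₁ ∩ X₁)).toReal with hadef
  set b : ℝ := (volume (A₁ ∩ X₂)).toReal with hbdef
  set c : ℝ := (volume (A₂ ∩ X₁)).toReal with hcdef
  set d : ℝ := (volume (A₂ ∩ X₂)).toReal with hddef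
  have ha0 : 0 ≤ a := ENNReal.toReal_nonneg
  have hb0 : 0 ≤ b := ENNReal.toReal_nonneg
  have hc0 : 0 ≤ c := ENNReal.toReal_nonneg
  have hd0 : 0 ≤ d := ENNReal.toReal_nonneg
  have hXhalf : ((volume X₁).toReal = 1/2) ∧ ((volume X₂).toReal = 1/2) := by
    constructor <;> [rw [hX₁]; rw [hX₂]] <;> simp [ENNReal.toReal_div]
  -- values of pieces under the densities
  have hvalf₁ : ∀ S : Set ℝ, MeasurableSet S → S ⊆ Icc 0 1 →
      val f₁ S = 0.5 * (volume (S ∩ X₁)).toReal + (volume (S ∩ X₂)).toReal := by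
    intro S hSm hSs
    rw [hf₁def, val_piece X₁ hX₁m 0.5 (by norm_num) (by norm_num) S hSm (hfinIcc S hSs), hsplit S hSs]
  have hvalf₂ : ∀ S : Set ℝ, MeasurableSet S → S ⊆ Icc 0 1 →
      val f₂ S = ε * (volume (S ∩ X₁)).toReal + (volume (S ∩ X₂)).toReal := by
    intro S hSm hSs
    rw [hf₂def, val_piece X₁ hX₁m ε (le_of_lt hε0) (by linarith) S hSm (hfinIcc S hSs),
      hsplit S hSs]
  have hIccX₁ : Icc (0:ℝ) 1 ∩ X₁ = X₁ := inter_eq_self_of_subset_right hs1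
  have hIccX₂ : Icc (0:ℝ) 1 ∩ X₂ = X₂ := inter_eq_self_of_subset_right hs2
  -- Constraint C2 : 0.5 a + b ≥ 3/8
  have hC2 : 0.5 * a + b ≥ 3/8 := by
    have h := (hProp f₁ f₂ hA1 hA2).1
    rw [hvalf₁ _ hAm1 hAs1, hvalf₁ _ measurableSet_Icc (subset_refl _), hIccX₁, hIccX₂,
      hXhalf.1, hXhalf.2] at h
    rw [← hadef, ← hbdef] at h
    linarith [h]
  -- Constraint C3 : ε c + d ≥ 1/4 + ε/4
  have hC3 : ε * c + d ≥ 1/4 + ε/4 := by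
    have h := (hProp f₁ f₂ hA1 hA2).2
    rw [hvalf₂ _ hAm2 hAs2, hvalf₂ _ measurableSet_Icc (subset_refl _), hIccX₁, hIccX₂,
      hXhalf.1, hXhalf.2] at h
    rw [← hcdef, ← hddef] at h
    linarith [h]
  -- Constraint C1 : a + b ≤ 1/2  (truthfulness of agent 1 with true uniform density)
  have hC1 : a + b ≤ 1/2 := by
    have h := hTruth1 (fun _ => 1) f₁ f₂ hAu hA1 hA2
    rw [hM2] at h
    rw [val_one, val_one, ← hA₁def] at h
    have hvol : (volume A₁).toReal = a + b := by
      have h1 : volume A₁ = volume (A₁ ∩ X₁) + volume (A₁ \ X₁) :=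
        (measure_inter_add_diff A₁ hX₁m).symm
      rw [hsplit A₁ hAs1] at h1
      rw [hadef, hbdef, ← ENNReal.toReal_add (hfinIcc _ ((inter_subset_left).trans hAs1))
        (hfinIcc _ ((inter_subset_left).trans hAs1)), ← h1]
    rw [hvol] at h
    have hX₁v : (volume X₁).toReal = 1/2 := hXhalf.1
    simp only at h
    rw [hX₁v] at h
    linarith [h]
  -- Constraints C4, C5 : disjointness inside X₁ and X₂
  have hCsub : ∀ (Y : Set ℝ), MeasurableSet Y → Y ⊆ Icc 0 1 →
      volume (A₁ ∩ Y) + volume (A₂ ∩ Y) ≤ volume Y := by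
    intro Y hYm hYs
    rw [← measure_union (hAdisj.mono inter_subset_left inter_subset_left) (hAm2.inter hYm)]
    exact measure_mono (union_subset inter_subset_right inter_subset_right)
  have hC4 : a + c ≤ 1/2 := by
    have h := hCsub X₁ hX₁m hs1
    rw [hX₁] at h
    have := ENNReal.toReal_mono (by simp) h
    rw [ENNReal.toReal_add (hfinIcc _ ((inter_subset_right).trans hs1))
      (hfinIcc _ ((inter_subset_right).trans hs1))] at this
    calc a + c ≤ ((1:ℝ≥0∞)/2).toReal := this
      _ = 1/2 := by simp [ENNReal.toReal_div]
  have hC5 : b + d ≤ 1/2 := by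
    have h := hCsub X₂ hX₂m hs2
    rw [hX₂] at h
    have := ENNReal.toReal_mono (by simp) h
    rw [ENNReal.toReal_add (hfinIcc _ ((inter_subset_right).trans hs2))
      (hfinIcc _ ((inter_subset_right).trans hs2))] at this
    calc b + d ≤ ((1:ℝ≥0∞)/2).toReal := this
      _ = 1/2 := by simp [ENNReal.toReal_div]
  -- Solve the linear system
  have ha4 : a ≤ 1/4 := by linarith
  have hbge : b ≥ 1/4 := by linarith
  have hdle : d ≤ 1/4 := by linarith
  have hage : a ≥ 3/4 - 2*b := by linarith
  have hcle : c ≤ 2*b - 1/4 := by linarith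
  have hεc : ε * c ≤ ε * (2*b - 1/4) := mul_le_mul_of_nonneg_left hcle (le_of_lt hε0)
  have hb4 : b ≤ 1/4 := by
    by_contra hgt
    push_neg at hgt
    have k1 : ε*(2*b - 1/4) ≥ b - 1/4 + ε/4 := by linarith
    have k2 : ε*(2*b - 1/4) = 2*(ε*b) - ε/4 := by ring
    rw [k2] at k1
    have hp : (1 - 2*ε) * (b - 1/4) > 0 := mul_pos (by linarith) (by linarith)
    have hp2 : (1 - 2*ε) * (b - 1/4) = b - 1/4 - 2*(ε*b) + ε/2 := by ring
    rw [hp2] at hp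
    linarith
  have hb : b = 1/4 := le_antisymm hb4 hbge
  have ha : a = 1/4 := le_antisymm ha4 (by linarith)
  have hcle4 : c ≤ 1/4 := by linarith
  have hcge : c ≥ 1/4 := by
    have h1 : ε * (1/4) ≤ ε * c := by linarith
    exact (mul_le_mul_iff_right₀ hε0).mp h1
  have hc : c = 1/4 := le_antisymm hcle4 hcge
  have hd : d = 1/4 := by
    have h1 := hC3
    rw [hc] at h1
    linarith
  -- convert back to ENNReal equalities
  have hq : ((1:ℝ≥0∞)/4).toReal = 1/4 := by simp [ENNReal.toReal_div]
  have conv : ∀ S : Set ℝ, S ⊆ Icc 0 1 → (volume S).toReal = 1/4 → volume S = 1/4 := by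
    intro S hSs hS
    have := hfinIcc S hSs
    rw [← hq] at hS
    exact (ENNReal.toReal_eq_toReal_iff' this (by simp)).mp hS
  exact ⟨conv _ ((inter_subset_left).trans hAs1) ha,
    conv _ ((inter_subset_left).trans hAs1) hb,
    conv _ ((inter_subset_left).trans hAs2) hc,
    conv _ ((inter_subset_left).trans hAs2) hd⟩
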